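/- For the 2-qubit depolarizing channel W_m = p·I₄/4 + (1−p)|φ_m⟩⟨φ_m| with 0 ≤ p ≤ 1 applied to the Bell code states (M = 2K ≥ 4), the POVM Π_m = (4/M)|φ_m⟩⟨φ_m| satisfies the HYKL optimality conditions, and the minimum average error probability equals 1 − (4 − 3p)/M. -/

import Mathlib

open ComplexOrder

/-- The `M = 2K` generalized Bell vectors in `ℂ⁴`: for `k = 0,…,K−1`,
the vector with index `2k` (the paper's `1+2k`) is `(|00⟩ + e^{2πik/K}|11⟩)/√2`
and the one with index `2k+1` (the paper's `2+2k`) is `(|01⟩ + e^{2πik/K}|10⟩)/√2`. -/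
noncomputable def bell (K : ℕ) (m : Fin (2 * K)) : Fin 4 → ℂ :=
  let k : ℕ := m.val / 2
  let ω : ℂ := Complex.exp (2 * Real.pi * Complex.I * k / K)
  if m.val % 2 = 0 then
    ![1 / (Real.sqrt 2 : ℂ), 0, 0, ω / (Real.sqrt 2 : ℂ)]
  else
    ![0, 1 / (Real.sqrt 2 : ℂ), ω / (Real.sqrt 2 : ℂ), 0]

open Matrix Finset

-- pairing lemma
lemma sum_range_two_mul' {M : Type*} [AddCommMonoid M] (K : ℕ) (f : ℕ → M) :
    ∑ n ∈ Finset.range (2 * K), f n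
      = ∑ k ∈ Finset.range K, (f (2 * k) + f (2 * k + 1)) := by
  induction K with
  | zero => simp
  | succ K ih =>
    have h2 : 2 * (K + 1) = (2 * K + 1) + 1 := by ring
    rw [h2, Finset.sum_range_succ, Finset.sum_range_succ, Finset.sum_range_succ, ih]
    abel

-- smul of PSD by nonneg real
lemma psd_smul {n : Type*} [Fintype n] {A : Matrix n n ℂ} (hA : A.PosSemidef)
    {c : ℝ} (hc : 0 ≤ c) : ((c : ℂ) • A).PosSemidef := by
  refine Matrix.PosSemidef.of_dotProduct_mulVec_nonneg ?_ fun x => ?_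
  · unfold Matrix.IsHermitian
    rw [Matrix.conjTranspose_smul, hA.1.eq]
    congr 1
    simp
  · rw [Matrix.smul_mulVec, dotProduct_smul, smul_eq_mul]
    exact mul_nonneg (by exact_mod_cast hc) (hA.dotProduct_mulVec_nonneg x)

-- trace of PSD is nonneg
lemma psd_trace_nonneg {n : Type*} [Fintype n] [DecidableEq n] {A : Matrix n n ℂ}
    (hA : A.PosSemidef) : 0 ≤ A.trace := by
  rw [Matrix.trace]
  refine Finset.sum_nonneg fun i _ => ?_
  have := hA.dotProduct_mulVec_nonneg (Pi.single i 1)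
  simpa [dotProduct, Matrix.mulVec, Pi.single_apply, Finset.sum_ite_eq,
    Matrix.diag] using this

-- trace of product of PSDs is nonneg
lemma psd_trace_mul_nonneg {n : Type*} [Fintype n] [DecidableEq n]
    {A B : Matrix n n ℂ} (hA : A.PosSemidef) (hB : B.PosSemidef) :
    0 ≤ (A * B).trace := by
  obtain ⟨C, rfl⟩ : ∃ C : Matrix n n ℂ, B = Cᴴ * C := by
    open scoped MatrixOrder in
    obtain ⟨X, hX, -, hXB⟩ := CFC.exists_sqrt_of_isSelfAdjoint_of_quasispectrumRestricts
      hB.isHermitian (QuasispectrumRestricts.nnreal_of_nonneg hB.nonneg)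
    exact ⟨X, by rw [← hXB, ← star_eq_conjTranspose, hX.star_eq]⟩
  rw [← Matrix.mul_assoc, Matrix.trace_mul_cycle]
  exact psd_trace_nonneg (hA.mul_mul_conjTranspose_same C)


noncomputable def om (K k : ℕ) : ℂ := Complex.exp (2 * Real.pi * Complex.I * k / K)

noncomputable def vE (w : ℂ) : Fin 4 → ℂ :=
  ![1 / (Real.sqrt 2 : ℂ), 0, 0, w / (Real.sqrt 2 : ℂ)]

noncomputable def vO (w : ℂ) : Fin 4 → ℂ :=
  ![0, 1 / (Real.sqrt 2 : ℂ), w / (Real.sqrt 2 : ℂ), 0]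

lemma bell_eq (K : ℕ) (m : Fin (2 * K)) :
    bell K m = if m.val % 2 = 0 then vE (om K (m.val / 2)) else vO (om K (m.val / 2)) := rfl

lemma conj_om_mul (K k : ℕ) : (starRingEnd ℂ) (om K k) * om K k = 1 := by
  rw [om, ← Complex.exp_conj, ← Complex.exp_add]
  have : (starRingEnd ℂ) (2 * ↑Real.pi * Complex.I * ↑k / ↑K) =
      -(2 * ↑Real.pi * Complex.I * ↑k / ↑K) := by
    simp only [map_div₀, _root_.map_mul, Complex.conj_I, Complex.conj_ofReal, map_natCast, map_ofNat]
    ring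
  rw [this, neg_add_cancel, Complex.exp_zero]

lemma sum_om (K : ℕ) (hK : 2 ≤ K) : ∑ k ∈ Finset.range K, om K k = 0 := by
  have hprim := Complex.isPrimitiveRoot_exp K (by omega)
  have := hprim.geom_sum_eq_zero (by omega)
  rw [← this]
  refine Finset.sum_congr rfl fun k _ => ?_
  rw [om, ← Complex.exp_nat_mul]
  ring_nf

lemma sum_conj_om (K : ℕ) (hK : 2 ≤ K) :
    ∑ k ∈ Finset.range K, (starRingEnd ℂ) (om K k) = 0 := by
  rw [← map_sum, sum_om K hK, map_zero]

lemma sqrt2_mul_self : ((Real.sqrt 2 : ℝ) : ℂ) * ((Real.sqrt 2 : ℝ) : ℂ) = 2 := by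
  rw [← Complex.ofReal_mul, Real.mul_self_sqrt (by norm_num)]
  norm_num

lemma normE {w : ℂ} (hw : (starRingEnd ℂ) w * w = 1) : star (vE w) ⬝ᵥ vE w = 1 := by
  have h2 := sqrt2_mul_self
  have hs : ((Real.sqrt 2 : ℝ) : ℂ) ≠ 0 := by
    intro h; rw [h, mul_zero] at h2; norm_num at h2
  simp only [vE, dotProduct, Fin.sum_univ_four, Pi.star_apply]
  simp only [Matrix.cons_val_zero, Matrix.cons_val_one, Matrix.head_cons,
    Matrix.cons_val_two, Matrix.tail_cons, Matrix.cons_val_three]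
  simp only [star_div₀, star_one, RCLike.star_def, Complex.conj_ofReal]
  field_simp
  rw [hw]
  linear_combination -h2

lemma normO {w : ℂ} (hw : (starRingEnd ℂ) w * w = 1) : star (vO w) ⬝ᵥ vO w = 1 := by
  have h2 := sqrt2_mul_self
  have hs : ((Real.sqrt 2 : ℝ) : ℂ) ≠ 0 := by
    intro h; rw [h, mul_zero] at h2; norm_num at h2
  simp only [vO, dotProduct, Fin.sum_univ_four, Pi.star_apply]
  simp only [Matrix.cons_val_zero, Matrix.cons_val_one, Matrix.head_cons,
    Matrix.cons_val_two, Matrix.tail_cons, Matrix.cons_val_three]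
  simp only [star_div₀, star_one, RCLike.star_def, Complex.conj_ofReal]
  field_simp
  rw [hw]
  linear_combination -h2

lemma bell_norm (K : ℕ) (m : Fin (2 * K)) : star (bell K m) ⬝ᵥ bell K m = 1 := by
  rw [bell_eq]
  split_ifs
  · exact normE (conj_om_mul K _)
  · exact normO (conj_om_mul K _)

-- outer product square
lemma outer_sq {v : Fin 4 → ℂ} (hv : star v ⬝ᵥ v = 1) :
    Matrix.vecMulVec v (star v) * Matrix.vecMulVec v (star v) = Matrix.vecMulVec v (star v) := by
  ext i j
  rw [Matrix.mul_apply]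
  simp only [Matrix.vecMulVec_apply, Pi.star_apply]
  have : ∑ k, v i * star (v k) * (v k * star (v j))
      = (v i * star (v j)) * ∑ k, star (v k) * v k := by
    rw [Finset.mul_sum]
    exact Finset.sum_congr rfl fun k _ => by ring
  rw [this]
  have hv' : ∑ k, star (v k) * v k = 1 := by
    simpa [dotProduct] using hv
  rw [hv', mul_one]

lemma outer_herm (v : Fin 4 → ℂ) :
    (Matrix.vecMulVec v (star v)).IsHermitian := by
  ext i j
  simp [Matrix.vecMulVec_apply, Matrix.conjTranspose_apply, mul_comm]

lemma outer_psd (v : Fin 4 → ℂ) : (Matrix.vecMulVec v (star v)).PosSemidef := by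
  refine Matrix.PosSemidef.of_dotProduct_mulVec_nonneg (outer_herm v) fun x => ?_
  have : star x ⬝ᵥ (Matrix.vecMulVec v (star v)).mulVec x
      = star ((star v) ⬝ᵥ x) * ((star v) ⬝ᵥ x) := by
    simp only [Matrix.mulVec, Matrix.vecMulVec_apply, dotProduct, Pi.star_apply]
    rw [star_sum]
    simp only [star_mul', star_star]
    rw [Finset.sum_mul]
    refine Finset.sum_congr rfl fun i _ => ?_
    rw [Finset.mul_sum, Finset.mul_sum]
    refine Finset.sum_congr rfl fun k _ => by ring
  rw [this]
  exact star_mul_self_nonneg _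

lemma one_sub_outer_psd {v : Fin 4 → ℂ} (hv : star v ⬝ᵥ v = 1) :
    (1 - Matrix.vecMulVec v (star v)).PosSemidef := by
  set P := Matrix.vecMulVec v (star v) with hP
  have hherm : (1 - P).IsHermitian := by
    unfold Matrix.IsHermitian
    rw [Matrix.conjTranspose_sub, Matrix.conjTranspose_one, (outer_herm v).eq]
  have hsq : (1 - P) * (1 - P) = 1 - P := by
    rw [sub_mul, one_mul, mul_sub, mul_one, outer_sq hv]
    abel
  have : 1 - P = (1 - P) * (1 - P)ᴴ := by rw [hherm.eq, hsq]
  rw [this]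
  exact Matrix.posSemidef_self_mul_conjTranspose _

noncomputable def Amat (w : ℂ) : Matrix (Fin 4) (Fin 4) ℂ :=
  Matrix.of ![![0,0,0,(starRingEnd ℂ) w],![0,0,(starRingEnd ℂ) w,0],![0,w,0,0],![w,0,0,0]]

lemma outer_pair {w : ℂ} (hw : (starRingEnd ℂ) w * w = 1) :
    Matrix.vecMulVec (vE w) (star (vE w)) + Matrix.vecMulVec (vO w) (star (vO w)) =
    (1/2 : ℂ) • (1 : Matrix (Fin 4) (Fin 4) ℂ) + (1/2 : ℂ) • Amat w := by
  have h2 := sqrt2_mul_self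
  have hs : ((Real.sqrt 2 : ℝ) : ℂ) ≠ 0 := by
    intro h; rw [h, mul_zero] at h2; norm_num at h2
  ext i j
  fin_cases i <;> fin_cases j <;>
    (try simp [-Matrix.cons_vecMulVec, vE, vO, Amat, Matrix.vecMulVec_apply, Matrix.one_apply, star_div₀,
      Complex.conj_ofReal, RCLike.star_def, Matrix.vecHead, Matrix.vecTail]) <;>
    (try field_simp) <;>
    (try exact Or.inl (by rw [pow_two]; exact h2.symm)) <;>
    (try exact Or.inl h2.symm) <;>
    first
      | linear_combination h2
      | linear_combination -h2
      | linear_combination (starRingEnd ℂ) w * h2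
      | linear_combination w * h2
      | linear_combination -(starRingEnd ℂ) w * h2
      | linear_combination -w * h2
      | linear_combination 2*hw - h2
      | linear_combination 2*hw + h2
      | linear_combination hw * h2
      | ring

lemma sum_Amat (K : ℕ) (hK : 2 ≤ K) :
    ∑ k ∈ Finset.range K, Amat (om K k) = 0 := by
  ext i j
  rw [Matrix.sum_apply]
  fin_cases i <;> fin_cases j <;>
    simp [Amat, sum_om K hK, sum_conj_om K hK, Matrix.vecHead, Matrix.vecTail]

lemma sum_outer (K : ℕ) (hK : 2 ≤ K) :
    ∑ m : Fin (2 * K), Matrix.vecMulVec (bell K m) (star (bell K m))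
      = ((K : ℂ)/2) • (1 : Matrix (Fin 4) (Fin 4) ℂ) := by
  classical
  set F : ℕ → Matrix (Fin 4) (Fin 4) ℂ := fun n =>
    if h : n < 2 * K then Matrix.vecMulVec (bell K ⟨n, h⟩) (star (bell K ⟨n, h⟩)) else 0 with hF
  have h1 : ∑ m : Fin (2 * K), Matrix.vecMulVec (bell K m) (star (bell K m))
      = ∑ n ∈ Finset.range (2 * K), F n := by
    rw [← Fin.sum_univ_eq_sum_range]
    exact Finset.sum_congr rfl fun m _ => by simp [hF, m.isLt]
  rw [h1, sum_range_two_mul']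
  have h2 : ∀ k ∈ Finset.range K, F (2 * k) + F (2 * k + 1)
      = (1/2 : ℂ) • (1 : Matrix (Fin 4) (Fin 4) ℂ) + (1/2 : ℂ) • Amat (om K k) := by
    intro k hk
    rw [Finset.mem_range] at hk
    have e1 : 2 * k < 2 * K := by omega
    have e2 : 2 * k + 1 < 2 * K := by omega
    have hb1 : bell K ⟨2 * k, e1⟩ = vE (om K k) := by
      have hmod : (2 * k) % 2 = 0 := by omega
      have hdiv : (2 * k) / 2 = k := by omega
      simp only [bell_eq, Fin.val_mk]
      rw [if_pos hmod, hdiv]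
    have hb2 : bell K ⟨2 * k + 1, e2⟩ = vO (om K k) := by
      have hmod : ¬((2 * k + 1) % 2 = 0) := by omega
      have hdiv : (2 * k + 1) / 2 = k := by omega
      simp only [bell_eq, Fin.val_mk]
      rw [if_neg hmod, hdiv]
    rw [hF]
    simp only [dif_pos e1, dif_pos e2, hb1, hb2]
    exact outer_pair (conj_om_mul K k)
  rw [Finset.sum_congr rfl h2, Finset.sum_add_distrib]
  have hA0 : ∑ x ∈ Finset.range K, (1/2 : ℂ) • Amat (om K x) = 0 := by
    rw [← Finset.smul_sum, sum_Amat K hK, smul_zero]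
  rw [hA0, add_zero, Finset.sum_const, Finset.card_range,
    ← Nat.cast_smul_eq_nsmul ℂ, smul_smul]
  congr 1
  ring


/-- For the 2-qubit depolarizing channel `W_m = p I₄/4 + (1−p)|φ_m⟩⟨φ_m|` applied to
the Bell code (`M = 2K ≥ 4`), the POVM `Π_m = (4/M)|φ_m⟩⟨φ_m|` satisfies the HYKL
optimality conditions, and the minimum average error probability is `1 − (4−3p)/M`. -/
theorem bell_code_depolarizing (K : ℕ) (hK : 2 ≤ K)
    (p : ℝ) (hp0 : 0 ≤ p) (hp1 : p ≤ 1)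
    (W Pov : Fin (2 * K) → Matrix (Fin 4) (Fin 4) ℂ)
    (hWdef : ∀ m, W m = ((p : ℂ) / 4) • (1 : Matrix (Fin 4) (Fin 4) ℂ)
      + (1 - (p : ℂ)) • Matrix.vecMulVec (bell K m) (star (bell K m)))
    (hPovdef : ∀ m, Pov m = (4 / ((2 * K : ℕ) : ℂ)) •
      Matrix.vecMulVec (bell K m) (star (bell K m)))
    (Λ : Matrix (Fin 4) (Fin 4) ℂ)
    (hΛdef : Λ = ∑ m, (1 / ((2 * K : ℕ) : ℂ)) • (W m * Pov m)) :
    (∀ m, (Pov m).PosSemidef) ∧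
    (∑ m, Pov m = 1) ∧
    Λ.IsHermitian ∧
    (∀ m, (Λ - (1 / ((2 * K : ℕ) : ℂ)) • W m) * Pov m = 0) ∧
    (∀ m, (Λ - (1 / ((2 * K : ℕ) : ℂ)) • W m).PosSemidef) ∧
    IsLeast {e : ℂ | ∃ Q : Fin (2 * K) → Matrix (Fin 4) (Fin 4) ℂ,
        (∀ i, (Q i).PosSemidef) ∧ (∑ i, Q i = 1) ∧
        e = 1 - ∑ m, (1 / ((2 * K : ℕ) : ℂ)) * (W m * Q m).trace}
      (1 - (4 - 3 * (p : ℂ)) / ((2 * K : ℕ) : ℂ)) := by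
  have hK0 : (K : ℂ) ≠ 0 := Nat.cast_ne_zero.mpr (by omega)
  have hM : ((2 * K : ℕ) : ℂ) = 2 * (K : ℂ) := by push_cast; ring
  have hMne : ((2 * K : ℕ) : ℂ) ≠ 0 := by rw [hM]; exact mul_ne_zero two_ne_zero hK0
  set Φ : Fin (2 * K) → Matrix (Fin 4) (Fin 4) ℂ :=
    fun m => Matrix.vecMulVec (bell K m) (star (bell K m)) with hΦ
  have hsq : ∀ m, Φ m * Φ m = Φ m := fun m => outer_sq (bell_norm K m)
  have hΦsum : ∑ m, Φ m = ((K : ℂ)/2) • 1 := sum_outer K hK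
  have hc4 : (4 / ((2 * K : ℕ) : ℂ)) = (((4 / (2 * K) : ℝ)) : ℂ) := by push_cast; ring
  -- 1. POVM elements are PSD
  have hPovPSD : ∀ m, (Pov m).PosSemidef := by
    intro m
    rw [hPovdef m, hc4]
    exact psd_smul (outer_psd _) (by positivity)
  -- 2. POVM sums to identity
  have hPovsum : ∑ m, Pov m = 1 := by
    have h : ∑ m, Pov m = (4 / ((2 * K : ℕ) : ℂ)) • ∑ m, Φ m := by
      rw [Finset.smul_sum]; exact Finset.sum_congr rfl fun m _ => hPovdef m
    rw [h, hΦsum, smul_smul, hM,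
      show (4 / (2 * (K : ℂ))) * ((K : ℂ)/2) = 1 by field_simp; ring]
    exact one_smul _ _
  -- 3. Lagrange operator
  have hWP : ∀ m, (1 / ((2 * K : ℕ) : ℂ)) • (W m * Pov m)
      = ((4 - 3 * (p : ℂ)) / ((2 * K : ℕ) : ℂ)^2) • Φ m := by
    intro m
    rw [hWdef m, hPovdef m, add_mul, smul_mul_assoc, smul_mul_assoc, one_mul,
      mul_smul_comm, hsq m, smul_smul, smul_smul, ← add_smul, smul_smul]
    congr 1
    field_simp
    ring
  have hΛ' : Λ = ((4 - 3 * (p : ℂ)) / (4 * ((2 * K : ℕ) : ℂ))) • 1 := by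
    rw [hΛdef, Finset.sum_congr rfl (fun m _ => hWP m), ← Finset.smul_sum, hΦsum, smul_smul, hM]
    congr 1
    field_simp
    ring
  -- 4. Hermitian
  have hherm : Λ.IsHermitian := by
    rw [hΛ']
    unfold Matrix.IsHermitian
    rw [Matrix.conjTranspose_smul, Matrix.conjTranspose_one]
    congr 1
    simp [map_div₀, _root_.map_mul, map_sub, map_ofNat, Complex.conj_ofReal, map_natCast]
  -- 5. the operators Λ - (1/M) W m
  have hD : ∀ m, Λ - (1 / ((2 * K : ℕ) : ℂ)) • W m
      = ((((1 - p)/(2 * K) : ℝ)) : ℂ) • (1 - Φ m) := by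
    intro m
    rw [hΛ', hWdef m]
    push_cast
    match_scalars <;> field_simp <;> ring
  have hDpsd : ∀ m, (Λ - (1 / ((2 * K : ℕ) : ℂ)) • W m).PosSemidef := by
    intro m
    rw [hD m]
    refine psd_smul (one_sub_outer_psd (bell_norm K m)) ?_
    have : (0:ℝ) ≤ 1 - p := by linarith
    positivity
  have hzero : ∀ m, (Λ - (1 / ((2 * K : ℕ) : ℂ)) • W m) * Pov m = 0 := by
    intro m
    rw [hD m, hPovdef m, smul_mul_assoc, mul_smul_comm, sub_mul, one_mul, hsq m,
      sub_self, smul_zero, smul_zero]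
  -- trace of Λ
  refine ⟨hPovPSD, hPovsum, hherm, hzero, hDpsd, ?_, ?_⟩
  · -- membership
    refine ⟨Pov, hPovPSD, hPovsum, ?_⟩
    have h : ∑ m, (1 / ((2 * K : ℕ) : ℂ)) * (W m * Pov m).trace
        = (∑ m, (1 / ((2 * K : ℕ) : ℂ)) • (W m * Pov m)).trace := by
      rw [Matrix.trace_sum]
      exact Finset.sum_congr rfl fun m _ => by rw [Matrix.trace_smul, smul_eq_mul]
    rw [h, ← hΛdef, hΛ', Matrix.trace_smul, Matrix.trace_one]
    congr 1
    simp only [smul_eq_mul, Fintype.card_fin, Nat.cast_ofNat]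
    rw [hM]
    field_simp
  · -- lower bound
    rintro e ⟨Q, hQpsd, hQsum, rfl⟩
    have key : ∀ m, (1 / ((2 * K : ℕ) : ℂ)) * (W m * Q m).trace ≤ (Λ * Q m).trace := by
      intro m
      have h0 : 0 ≤ ((Λ - (1 / ((2 * K : ℕ) : ℂ)) • W m) * Q m).trace :=
        psd_trace_mul_nonneg (hDpsd m) (hQpsd m)
      rw [Matrix.sub_mul, Matrix.trace_sub, smul_mul_assoc, Matrix.trace_smul,
        smul_eq_mul] at h0
      exact sub_nonneg.mp h0
    have hsum_le : ∑ m, (1 / ((2 * K : ℕ) : ℂ)) * (W m * Q m).trace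
        ≤ ∑ m, (Λ * Q m).trace := Finset.sum_le_sum fun m _ => key m
    have htr : ∑ m, (Λ * Q m).trace = (4 - 3 * (p : ℂ)) / ((2 * K : ℕ) : ℂ) := by
      rw [← Matrix.trace_sum, ← Matrix.mul_sum, hQsum, Matrix.mul_one, hΛ',
        Matrix.trace_smul, Matrix.trace_one]
      simp only [smul_eq_mul, Fintype.card_fin, Nat.cast_ofNat]
      rw [hM]
      field_simp
    rw [htr] at hsum_le
    exact sub_le_sub_left hsum_le 1
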